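/- Let β, ς be real-analytic functions near I₂^c with β(I₂^c) ≠ 0, let n, m > 0 (each either a positive integer or the reciprocal of one), and let b be real-analytic with b(I₂^c) > 0. Define φ_u(I₂) = (I₂-I₂^c)ⁿ β(I₂) + b(I₂) ln(I₂ - I₂^c) + Λ(I₂) and φ_s(I₂) = (I₂-I₂^c)^m ς(I₂), with Λ real-analytic near I₂^c. Then there exists ε > 0 such that φ_u'(I₂) > φ_s'(I₂) for all I₂ ∈ (I₂^c, I₂^c + ε); in particular φ_u - φ_s is strictly increasing there and, since φ_u → -∞ while φ_s → 0 as I₂ → (I₂^c)⁺, the graphs of φ_u and φ_s (as curves θ = φ(I₂) with θ taken mod 2π) intersect transversely at infinitely many points accumulating at I₂ = I₂^c. -/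

import Mathlib

open Filter Topology Set Real

private lemma deriv_contAt {f : ℝ → ℝ} {x : ℝ} (hf : AnalyticAt ℝ f x) :
    ContinuousAt (deriv f) x := by
  obtain ⟨s, hs, hfs⟩ := hf.exists_mem_nhds_analyticOnNhd
  exact (hfs.deriv x (mem_of_mem_nhds hs)).continuousAt

theorem stmt_14 (I₂c : ℝ) (β ς b Λ : ℝ → ℝ)
    (hβ : AnalyticAt ℝ β I₂c) (hβ0 : β I₂c ≠ 0)
    (hς : AnalyticAt ℝ ς I₂c)
    (hb : AnalyticAt ℝ b I₂c) (hbpos : 0 < b I₂c)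
    (hΛ : AnalyticAt ℝ Λ I₂c)
    (n m : ℝ)
    (hn : ∃ k : ℕ, 0 < k ∧ (n = k ∨ n = 1/(k:ℝ)))
    (hm : ∃ k : ℕ, 0 < k ∧ (m = k ∨ m = 1/(k:ℝ)))
    (φu φs : ℝ → ℝ)
    (hφu : ∀ I₂, φu I₂ = (I₂ - I₂c) ^ n * β I₂ + b I₂ * Real.log (I₂ - I₂c) + Λ I₂)
    (hφs : ∀ I₂, φs I₂ = (I₂ - I₂c) ^ m * ς I₂) :
    (∃ ε > 0, (∀ I₂ ∈ Ioo I₂c (I₂c + ε), deriv φs I₂ < deriv φu I₂) ∧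
      StrictMonoOn (fun I₂ => φu I₂ - φs I₂) (Ioo I₂c (I₂c + ε))) ∧
    Tendsto φu (𝓝[>] I₂c) atBot ∧
    Tendsto φs (𝓝[>] I₂c) (𝓝 0) ∧
    (∀ ε' > 0, ∃ I₂ ∈ Ioo I₂c (I₂c + ε'),
      (∃ k : ℤ, φu I₂ = φs I₂ + 2 * π * k) ∧ deriv φu I₂ ≠ deriv φs I₂) := by
  obtain ⟨kn, hkn, hn'⟩ := hn
  obtain ⟨km, hkm, hm'⟩ := hm
  have hn0 : 0 < n := by
    rcases hn' with rfl | rfl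
    · exact_mod_cast hkn
    · exact one_div_pos.mpr (by exact_mod_cast hkn)
  have hm0 : 0 < m := by
    rcases hm' with rfl | rfl
    · exact_mod_cast hkm
    · exact one_div_pos.mpr (by exact_mod_cast hkm)
  have hx_pos : ∀ᶠ y in 𝓝[>] I₂c, I₂c < y := eventually_mem_nhdsWithin
  -- basic limit of the shift
  have hsub : Tendsto (fun y => y - I₂c) (𝓝[>] I₂c) (𝓝[>] (0:ℝ)) := by
    apply tendsto_nhdsWithin_of_tendsto_nhds_of_eventually_within
    · have : Tendsto (fun y => y - I₂c) (𝓝 I₂c) (𝓝 (I₂c - I₂c)) :=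
        (continuous_id.sub continuous_const).continuousAt
      simpa using this.mono_left nhdsWithin_le_nhds
    · filter_upwards [hx_pos] with y hy
      exact sub_pos.2 hy
  have hsub' : Tendsto (fun y => y - I₂c) (𝓝[>] I₂c) (𝓝 (0:ℝ)) :=
    hsub.mono_right nhdsWithin_le_nhds
  have Lpow : ∀ p : ℝ, 0 < p →
      Tendsto (fun y => (y - I₂c) ^ p) (𝓝[>] I₂c) (𝓝 (0:ℝ)) := by
    intro p hp
    have hc := (Real.continuousAt_rpow_const 0 p (Or.inr hp.le)).tendsto
    rw [Real.zero_rpow hp.ne'] at hc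
    exact hc.comp hsub'
  have Llog : Tendsto (fun y => Real.log (y - I₂c)) (𝓝[>] I₂c) atBot :=
    Real.tendsto_log_nhdsGT_zero.comp hsub
  have Lxlog : Tendsto (fun y => (y - I₂c) * Real.log (y - I₂c)) (𝓝[>] I₂c) (𝓝 0) := by
    have h2 := (tendsto_log_mul_rpow_nhdsGT_zero one_pos).comp hsub
    refine h2.congr fun y => ?_
    simp [Function.comp, Real.rpow_one, mul_comm]
  -- continuity facts (within the right-neighborhood filter)
  have Cβ : Tendsto β (𝓝[>] I₂c) (𝓝 (β I₂c)) := hβ.continuousAt.tendsto.mono_left nhdsWithin_le_nhds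
  have Cς : Tendsto ς (𝓝[>] I₂c) (𝓝 (ς I₂c)) := hς.continuousAt.tendsto.mono_left nhdsWithin_le_nhds
  have Cb : Tendsto b (𝓝[>] I₂c) (𝓝 (b I₂c)) := hb.continuousAt.tendsto.mono_left nhdsWithin_le_nhds
  have CΛ : Tendsto Λ (𝓝[>] I₂c) (𝓝 (Λ I₂c)) := hΛ.continuousAt.tendsto.mono_left nhdsWithin_le_nhds
  have Cβ' : Tendsto (deriv β) (𝓝[>] I₂c) (𝓝 (deriv β I₂c)) :=
    (deriv_contAt hβ).tendsto.mono_left nhdsWithin_le_nhds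
  have Cς' : Tendsto (deriv ς) (𝓝[>] I₂c) (𝓝 (deriv ς I₂c)) :=
    (deriv_contAt hς).tendsto.mono_left nhdsWithin_le_nhds
  have Cb' : Tendsto (deriv b) (𝓝[>] I₂c) (𝓝 (deriv b I₂c)) :=
    (deriv_contAt hb).tendsto.mono_left nhdsWithin_le_nhds
  have CΛ' : Tendsto (deriv Λ) (𝓝[>] I₂c) (𝓝 (deriv Λ I₂c)) :=
    (deriv_contAt hΛ).tendsto.mono_left nhdsWithin_le_nhds
  -- derivative formulas
  set Du : ℝ → ℝ := fun y =>
    (n * (y - I₂c) ^ (n-1) * β y + (y - I₂c) ^ n * deriv β y) +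
      (deriv b y * Real.log (y - I₂c) + b y * (y - I₂c)⁻¹) + deriv Λ y with hDu
  set Ds : ℝ → ℝ := fun y =>
    m * (y - I₂c) ^ (m-1) * ς y + (y - I₂c) ^ m * deriv ς y with hDs
  have hφu' : φu = fun z => (z - I₂c) ^ n * β z + b z * Real.log (z - I₂c) + Λ z := funext hφu
  have hφs' : φs = fun z => (z - I₂c) ^ m * ς z := funext hφs
  have hder : ∀ᶠ y in 𝓝[>] I₂c, HasDerivAt φu (Du y) y ∧ HasDerivAt φs (Ds y) y := by
    filter_upwards [hx_pos, nhdsWithin_le_nhds hβ.eventually_analyticAt,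
      nhdsWithin_le_nhds hς.eventually_analyticAt, nhdsWithin_le_nhds hb.eventually_analyticAt,
      nhdsWithin_le_nhds hΛ.eventually_analyticAt] with y hy hβy hςy hby hΛy
    have hne : y - I₂c ≠ 0 := sub_ne_zero.2 (ne_of_gt hy)
    have hpow : ∀ p : ℝ, HasDerivAt (fun z => (z - I₂c) ^ p) (p * (y - I₂c) ^ (p-1)) y := by
      intro p
      have h1 := (Real.hasDerivAt_rpow_const (x := y - I₂c) (p := p) (Or.inl hne)).comp y
        ((hasDerivAt_id y).sub_const I₂c)
      simpa [Function.comp_def] using h1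
    have hlog : HasDerivAt (fun z => Real.log (z - I₂c)) ((y - I₂c)⁻¹) y := by
      have h1 := (Real.hasDerivAt_log hne).comp y ((hasDerivAt_id y).sub_const I₂c)
      simpa [Function.comp_def] using h1
    have hu1 := (hpow n).mul hβy.differentiableAt.hasDerivAt
    have hu2 := hby.differentiableAt.hasDerivAt.mul hlog
    have hu := (hu1.add hu2).add hΛy.differentiableAt.hasDerivAt
    have hs1 := (hpow m).mul hςy.differentiableAt.hasDerivAt
    rw [hφu', hφs']
    exact ⟨hu, hs1⟩
  -- limits of x * Du and x * Ds
  have LDu : Tendsto (fun y => (y - I₂c) * Du y) (𝓝[>] I₂c) (𝓝 (b I₂c)) := by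
    have T : Tendsto (fun y =>
        n * (y - I₂c) ^ n * β y + (y - I₂c) ^ (n+1) * deriv β y
          + (deriv b y * ((y - I₂c) * Real.log (y - I₂c)) + b y) + (y - I₂c) * deriv Λ y)
        (𝓝[>] I₂c)
        (𝓝 (n * 0 * β I₂c + 0 * deriv β I₂c + (deriv b I₂c * 0 + b I₂c) + 0 * deriv Λ I₂c)) := by
      exact (((tendsto_const_nhds.mul (Lpow n hn0)).mul Cβ).add
        ((Lpow (n+1) (by linarith)).mul Cβ')).add ((Cb'.mul Lxlog).add Cb) |>.add (hsub'.mul CΛ')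
    have T' := T
    rw [show n * 0 * β I₂c + 0 * deriv β I₂c + (deriv b I₂c * 0 + b I₂c) + 0 * deriv Λ I₂c
        = b I₂c by ring] at T'
    refine T'.congr' ?_
    filter_upwards [hx_pos] with y hy
    have hne : y - I₂c ≠ 0 := sub_ne_zero.2 (ne_of_gt hy)
    have e1 : (y - I₂c) ^ (n-1) * (y - I₂c) = (y - I₂c) ^ n := by
      rw [← Real.rpow_add_one hne, sub_add_cancel]
    have e2 : (y - I₂c) ^ n * (y - I₂c) = (y - I₂c) ^ (n+1) := (Real.rpow_add_one hne n).symm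
    have e3 : (y - I₂c) * (y - I₂c)⁻¹ = 1 := mul_inv_cancel₀ hne
    have : (y - I₂c) * Du y
        = n * ((y - I₂c) ^ (n-1) * (y - I₂c)) * β y
          + ((y - I₂c) ^ n * (y - I₂c)) * deriv β y
          + (deriv b y * ((y - I₂c) * Real.log (y - I₂c))
            + b y * ((y - I₂c) * (y - I₂c)⁻¹)) + (y - I₂c) * deriv Λ y := by
      rw [hDu]; ring
    rw [this, e1, e2, e3, mul_one]
  have LDs : Tendsto (fun y => (y - I₂c) * Ds y) (𝓝[>] I₂c) (𝓝 0) := by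
    have T : Tendsto (fun y =>
        m * (y - I₂c) ^ m * ς y + (y - I₂c) ^ (m+1) * deriv ς y)
        (𝓝[>] I₂c) (𝓝 (m * 0 * ς I₂c + 0 * deriv ς I₂c)) :=
      ((tendsto_const_nhds.mul (Lpow m hm0)).mul Cς).add ((Lpow (m+1) (by linarith)).mul Cς')
    have T' := T
    rw [show m * 0 * ς I₂c + 0 * deriv ς I₂c = 0 by ring] at T'
    refine T'.congr' ?_
    filter_upwards [hx_pos] with y hy
    have hne : y - I₂c ≠ 0 := sub_ne_zero.2 (ne_of_gt hy)
    have e1 : (y - I₂c) ^ (m-1) * (y - I₂c) = (y - I₂c) ^ m := by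
      rw [← Real.rpow_add_one hne, sub_add_cancel]
    have e2 : (y - I₂c) ^ m * (y - I₂c) = (y - I₂c) ^ (m+1) := (Real.rpow_add_one hne m).symm
    have : (y - I₂c) * Ds y
        = m * ((y - I₂c) ^ (m-1) * (y - I₂c)) * ς y
          + ((y - I₂c) ^ m * (y - I₂c)) * deriv ς y := by
      rw [hDs]; ring
    rw [this, e1, e2]
  have hlt : ∀ᶠ y in 𝓝[>] I₂c, Ds y < Du y := by
    filter_upwards [LDs.eventually_lt LDu hbpos, hx_pos] with y h1 h2
    exact (mul_lt_mul_iff_right₀ (sub_pos.2 h2)).1 h1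
  have hmain := hder.and hlt
  obtain ⟨u, hu_mem, hu_sub⟩ := mem_nhdsGT_iff_exists_Ioo_subset.1 hmain
  have huI : I₂c < u := hu_mem
  have hIoo : I₂c + (u - I₂c) = u := by ring
  -- part 2 and 3
  have Tu : Tendsto φu (𝓝[>] I₂c) atBot := by
    rw [hφu']
    have t1 : Tendsto (fun y => (y - I₂c) ^ n * β y) (𝓝[>] I₂c) (𝓝 (0 * β I₂c)) :=
      (Lpow n hn0).mul Cβ
    have t2 : Tendsto (fun y => b y * Real.log (y - I₂c)) (𝓝[>] I₂c) atBot :=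
      Tendsto.pos_mul_atBot hbpos Cb Llog
    exact (t1.add_atBot t2).atBot_add CΛ
  have Ts : Tendsto φs (𝓝[>] I₂c) (𝓝 0) := by
    rw [hφs']
    simpa using (Lpow m hm0).mul Cς
  refine ⟨⟨u - I₂c, by linarith, ?_, ?_⟩, Tu, Ts, ?_⟩
  · intro y hy
    rw [hIoo] at hy
    obtain ⟨⟨h1, h2⟩, h3⟩ := hu_sub hy
    rw [h2.deriv, h1.deriv]
    exact h3
  · rw [hIoo]
    apply strictMonoOn_of_deriv_pos (convex_Ioo _ _)
    · intro y hy
      obtain ⟨⟨h1, h2⟩, _⟩ := hu_sub hy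
      exact (h1.sub h2).continuousAt.continuousWithinAt
    · intro y hy
      rw [interior_Ioo] at hy
      obtain ⟨⟨h1, h2⟩, h3⟩ := hu_sub hy
      rw [(h1.fun_sub h2).deriv]
      exact sub_pos.2 h3
  · intro ε' hε'
    set δ := min (u - I₂c) ε' with hδdef
    have hδ : 0 < δ := lt_min (by linarith) hε'
    set a := I₂c + δ/2 with ha_def
    have haI : I₂c < a := by simp only [ha_def]; linarith
    have hau : a < u := by
      have : δ ≤ u - I₂c := min_le_left _ _
      simp only [ha_def]; linarith
    have haε' : a < I₂c + ε' := by
      have : δ ≤ ε' := min_le_right _ _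
      simp only [ha_def]; linarith
    set f : ℝ → ℝ := fun y => φu y - φs y with hf_def
    set k : ℤ := ⌊f a / (2*π)⌋ with hk_def
    have hπ : (0:ℝ) < 2*π := by positivity
    have hk : 2*π*k ≤ f a := by
      have h1 : (k:ℝ) ≤ f a / (2*π) := Int.floor_le _
      have := (le_div_iff₀ hπ).1 h1
      linarith
    have hf_bot : Tendsto f (𝓝[>] I₂c) atBot := by
      have := Tu.atBot_add Ts.neg
      refine this.congr fun y => ?_
      simp [hf_def, sub_eq_add_neg]
    have hev : ∀ᶠ y in 𝓝[>] I₂c, f y < 2*π*k ∧ y ∈ Ioo I₂c a :=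
      (hf_bot.eventually (eventually_lt_atBot (2*π*k))).and
        (eventually_mem_set.2 (Ioo_mem_nhdsGT_of_mem ⟨le_refl _, haI⟩))
    obtain ⟨c, hc1, hc2⟩ := hev.exists
    have hca : c ≤ a := hc2.2.le
    have hsubset : Icc c a ⊆ Ioo I₂c u := fun y hy =>
      ⟨lt_of_lt_of_le hc2.1 hy.1, lt_of_le_of_lt hy.2 hau⟩
    have hcont : ContinuousOn f (Icc c a) := fun y hy => by
      obtain ⟨⟨h1, h2⟩, _⟩ := hu_sub (hsubset hy)
      exact (h1.sub h2).continuousAt.continuousWithinAt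
    have hmem : (2*π*k) ∈ Icc (f c) (f a) := ⟨hc1.le, hk⟩
    obtain ⟨x, hx, hfx⟩ := intermediate_value_Icc hca hcont hmem
    obtain ⟨⟨h1, h2⟩, h3⟩ := hu_sub (hsubset hx)
    refine ⟨x, ⟨lt_of_lt_of_le hc2.1 hx.1, lt_of_le_of_lt hx.2 haε'⟩, ⟨k, ?_⟩, ?_⟩
    · have : φu x - φs x = 2*π*k := hfx
      linarith
    · rw [h1.deriv, h2.deriv]
      exact ne_of_gt h3
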